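/- arXiv:1805.09950 — 3 statements merged into one kernel-verified Lean document; each statement's English description precedes it below -/
import Mathlib

section
/- For real numbers α_0,...,α_{t-1} with 0 ≤ α_τ ≤ min{1, 1/μ} for a fixed μ > 0, the product S = ∏_{τ=0}^{t-1}(1 - α_τ μ) satisfies 0 ≤ S ≤ 1, and with η = ∑_{τ=0}^{t-1} α_τ, one has (1/2)·min{1, η μ} ≤ 1 - S ≤ min{1, η μ}. -/
open Finset

lemma aux_one_add_sum_le_prod {ι : Type*} (s : Finset ι) (x : ι → ℝ)
    (hx : ∀ i ∈ s, 0 ≤ x i) : 1 + ∑ i ∈ s, x i ≤ ∏ i ∈ s, (1 + x i) := by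
  induction s using Finset.cons_induction_on with
  | empty => simp
  | cons _ _ ha ih =>
      rename_i a s
      rw [Finset.sum_cons, Finset.prod_cons]
      have h1 : 0 ≤ x a := hx a (mem_cons_self a s)
      have h2 : ∀ i ∈ s, 0 ≤ x i := fun i hi => hx i (Finset.mem_cons_of_mem hi)
      have ih' := ih h2
      have hsum : 0 ≤ ∑ i ∈ s, x i := Finset.sum_nonneg h2
      nlinarith [ih' ]

lemma aux_one_sub_prod_le_sum {ι : Type*} (s : Finset ι) (x : ι → ℝ)
    (hx : ∀ i ∈ s, 0 ≤ x i ∧ x i ≤ 1) :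
    1 - ∏ i ∈ s, (1 - x i) ≤ ∑ i ∈ s, x i := by
  induction s using Finset.cons_induction_on with
  | empty => simp
  | cons _ _ ha ih =>
      rename_i a s
      rw [Finset.sum_cons, Finset.prod_cons]
      have h1 := hx a (mem_cons_self a s)
      have h2 : ∀ i ∈ s, 0 ≤ x i ∧ x i ≤ 1 := fun i hi => hx i (Finset.mem_cons_of_mem hi)
      have ih' := ih h2
      have hP0 : 0 ≤ ∏ i ∈ s, (1 - x i) :=
        Finset.prod_nonneg fun i hi => by linarith [(h2 i hi).2]
      have hP1 : ∏ i ∈ s, (1 - x i) ≤ 1 :=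
        Finset.prod_le_one (fun i hi => by linarith [(h2 i hi).2])
          (fun i hi => by linarith [(h2 i hi).1])
      nlinarith

theorem stmt_0 (t : ℕ) (μ : ℝ) (hμ : 0 < μ) (α : Fin t → ℝ)
    (hα : ∀ τ, 0 ≤ α τ ∧ α τ ≤ min 1 (1 / μ)) :
    0 ≤ ∏ τ, (1 - α τ * μ) ∧ (∏ τ, (1 - α τ * μ)) ≤ 1 ∧
      (1 / 2) * min 1 ((∑ τ, α τ) * μ) ≤ 1 - ∏ τ, (1 - α τ * μ) ∧
      1 - ∏ τ, (1 - α τ * μ) ≤ min 1 ((∑ τ, α τ) * μ) := by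
  set x : Fin t → ℝ := fun τ => α τ * μ with hx_def
  have hx : ∀ τ, 0 ≤ x τ ∧ x τ ≤ 1 := by
    intro τ
    obtain ⟨h0, h1⟩ := hα τ
    constructor
    · exact mul_nonneg h0 hμ.le
    · have : α τ ≤ 1 / μ := le_trans h1 (min_le_right _ _)
      calc α τ * μ ≤ (1 / μ) * μ := by
            exact mul_le_mul_of_nonneg_right this hμ.le
        _ = 1 := by field_simp
  have hsum_eq : (∑ τ, α τ) * μ = ∑ τ, x τ := by
    rw [Finset.sum_mul]
  set s := ∑ τ, x τ with hs_def
  have hs0 : 0 ≤ s := Finset.sum_nonneg fun i _ => (hx i).1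
  have hP0 : 0 ≤ ∏ τ, (1 - x τ) :=
    Finset.prod_nonneg fun i _ => by linarith [(hx i).2]
  have hP1 : ∏ τ, (1 - x τ) ≤ 1 :=
    Finset.prod_le_one (fun i _ => by linarith [(hx i).2]) (fun i _ => by linarith [(hx i).1])
  -- upper bound
  have hup : 1 - ∏ τ, (1 - x τ) ≤ s :=
    aux_one_sub_prod_le_sum Finset.univ x fun i _ => hx i
  -- lower bound: ∏(1-x) ≤ 1/(1+s)
  have hprodmul : (∏ τ, (1 - x τ)) * (∏ τ, (1 + x τ)) ≤ 1 := by
    rw [← Finset.prod_mul_distrib]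
    refine Finset.prod_le_one (fun i _ => ?_) (fun i _ => ?_)
    · have := hx i; nlinarith [this.1, this.2]
    · have := hx i; nlinarith [this.1, this.2]
  have hQ : 1 + s ≤ ∏ τ, (1 + x τ) :=
    aux_one_add_sum_le_prod Finset.univ x fun i _ => (hx i).1
  have h1s : (0:ℝ) < 1 + s := by linarith
  have hPle : ∏ τ, (1 - x τ) ≤ 1 / (1 + s) := by
    rw [le_div_iff₀ h1s]
    calc (∏ τ, (1 - x τ)) * (1 + s) ≤ (∏ τ, (1 - x τ)) * (∏ τ, (1 + x τ)) :=
          mul_le_mul_of_nonneg_left hQ hP0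
      _ ≤ 1 := hprodmul
  have hlow : (1/2) * min 1 s ≤ 1 - ∏ τ, (1 - x τ) := by
    have key : 1 - 1 / (1 + s) = s / (1 + s) := by field_simp; ring
    have h2 : s / (1 + s) ≤ 1 - ∏ τ, (1 - x τ) := by
      rw [← key]; linarith
    rcases le_total s 1 with h | h
    · have : (1/2) * min 1 s = s/2 := by rw [min_eq_right h]; ring
      rw [this]
      have : s / 2 ≤ s / (1 + s) := by
        rw [div_le_div_iff₀ (by norm_num) h1s]; nlinarith
      linarith
    · have : (1/2) * min 1 s = 1/2 := by rw [min_eq_left h]; ring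
      rw [this]
      have : (1:ℝ)/2 ≤ s / (1 + s) := by
        rw [le_div_iff₀ h1s]; nlinarith
      linarith
  refine ⟨hP0, hP1, ?_, ?_⟩
  · rw [hsum_eq]; exact hlow
  · rw [hsum_eq]; exact le_min (by linarith) hup
end

section
/- For μ > 0, step sizes 0 ≤ α_τ ≤ min{1, 1/μ}, total step size η = ∑_{τ=0}^{t-1} α_τ, and S = ∏_{τ=0}^{t-1}(1 - α_τ μ), one has S² ≤ 1/(2 e η μ) whenever η > 0. -/
theorem stmt_1 (t : ℕ) (μ : ℝ) (hμ : 0 < μ) (α : Fin t → ℝ)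
    (hα : ∀ τ, 0 ≤ α τ ∧ α τ ≤ min 1 (1 / μ))
    (hη : 0 < ∑ τ, α τ) :
    (∏ τ, (1 - α τ * μ)) ^ 2 ≤ 1 / (2 * Real.exp 1 * (∑ τ, α τ) * μ) := by
  set η := ∑ τ, α τ with hηdef
  have hfac : ∀ τ : Fin t, 0 ≤ 1 - α τ * μ := by
    intro τ
    have h1 : α τ ≤ 1 / μ := le_trans (hα τ).2 (min_le_right _ _)
    have h2 : α τ * μ ≤ (1 / μ) * μ := mul_le_mul_of_nonneg_right h1 hμ.le
    have h3 : (1 / μ) * μ = 1 := by field_simp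
    linarith
  have hprod_nonneg : 0 ≤ ∏ τ, (1 - α τ * μ) :=
    Finset.prod_nonneg (fun τ _ => hfac τ)
  have hle : ∏ τ, (1 - α τ * μ) ≤ Real.exp (-(η * μ)) := by
    have hstep : ∏ τ, (1 - α τ * μ) ≤ ∏ τ, Real.exp (-(α τ * μ)) := by
      apply Finset.prod_le_prod (fun τ _ => hfac τ)
      intro τ _
      have := Real.add_one_le_exp (-(α τ * μ))
      linarith
    have hsum : (∑ τ, -(α τ * μ)) = -(η * μ) := by
      rw [hηdef, Finset.sum_mul, ← Finset.sum_neg_distrib]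
    calc ∏ τ, (1 - α τ * μ) ≤ ∏ τ, Real.exp (-(α τ * μ)) := hstep
      _ = Real.exp (∑ τ, -(α τ * μ)) := (Real.exp_sum _ _).symm
      _ = Real.exp (-(η * μ)) := by rw [hsum]
  have hx : 0 < η * μ := mul_pos hη hμ
  have h1 : 2 * (η * μ) ≤ Real.exp (2 * (η * μ) - 1) := by
    have := Real.add_one_le_exp (2 * (η * μ) - 1); linarith
  have h2 : 2 * (η * μ) * Real.exp 1 ≤ Real.exp (2 * (η * μ)) := by
    rw [Real.exp_sub] at h1
    exact (le_div_iff₀ (Real.exp_pos 1)).mp h1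
  have hsq : (∏ τ, (1 - α τ * μ)) ^ 2 ≤ Real.exp (-(η * μ)) ^ 2 :=
    pow_le_pow_left₀ hprod_nonneg hle 2
  have hexp2 : Real.exp (-(η * μ)) ^ 2 = Real.exp (-(2 * (η * μ))) := by
    rw [← Real.exp_nat_mul]; ring_nf
  have hfin : Real.exp (-(2 * (η * μ))) ≤ 1 / (2 * Real.exp 1 * η * μ) := by
    rw [Real.exp_neg, inv_eq_one_div, div_le_div_iff₀ (Real.exp_pos _) (by positivity)]
    nlinarith [Real.exp_pos (2 * (η * μ)), Real.exp_pos 1]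
  calc (∏ τ, (1 - α τ * μ)) ^ 2 ≤ Real.exp (-(η * μ)) ^ 2 := hsq
    _ = Real.exp (-(2 * (η * μ))) := hexp2
    _ ≤ 1 / (2 * Real.exp 1 * η * μ) := hfin
end

section
/- Let μ̂_1 ≥ ... ≥ μ̂_n ≥ 0 and η > 0, and let S_jj = ∏_{τ=0}^{t-1}(1 - α_τ μ̂_j) with step sizes satisfying 0 ≤ α_τ ≤ min{1, 1/μ̂_1} and ∑_τ α_τ = η. Then (1/2^4)·∑_{j=1}^n (min{1, η μ̂_j})^4 ≤ ∑_{j=1}^n (1 - S_jj)^4 ≤ ∑_{j=1}^n (min{1, η μ̂_j})^4. -/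
open Finset in
lemma weier {ι : Type*} (s : Finset ι) (f : ι → ℝ)
    (h0 : ∀ i ∈ s, 0 ≤ f i) (h1 : ∀ i ∈ s, f i ≤ 1) :
    1 - ∑ i ∈ s, f i ≤ ∏ i ∈ s, (1 - f i) := by
  classical
  induction s using Finset.induction_on with
  | empty => simp
  | @insert a s' hns ih =>
    rw [Finset.sum_insert hns, Finset.prod_insert hns]
    have h0' : ∀ i ∈ s', 0 ≤ f i := fun i hi => h0 i (Finset.mem_insert_of_mem hi)
    have h1' : ∀ i ∈ s', f i ≤ 1 := fun i hi => h1 i (Finset.mem_insert_of_mem hi)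
    have ha : 0 ≤ f a := h0 a (Finset.mem_insert_self a s')
    have ha1 : f a ≤ 1 := h1 a (Finset.mem_insert_self a s')
    have ih' := ih h0' h1'
    have hsnn : 0 ≤ ∑ i ∈ s', f i := Finset.sum_nonneg h0'
    nlinarith [ih', mul_nonneg (sub_nonneg.2 ha1) (sub_nonneg.2 (le_trans ih' (le_refl _))), mul_le_mul_of_nonneg_left ih' (sub_nonneg.2 ha1)]

lemma exp_half (m : ℝ) (h0 : 0 ≤ m) (h1 : m ≤ 1) : Real.exp (-m) ≤ 1 - m / 2 := by
  have h2 : (1 - m / 2) * Real.exp m ≥ 1 := by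
    nlinarith [Real.add_one_le_exp m, Real.exp_pos m]
  have h3 : Real.exp (-m) * Real.exp m = 1 := by
    rw [← Real.exp_add]; simp
  nlinarith [Real.exp_pos m, Real.exp_pos (-m)]

lemma key (t : ℕ) (x : ℝ) (hx : 0 ≤ x) (η : ℝ) (hη : 0 < η) (α : Fin t → ℝ)
    (h0 : ∀ τ, 0 ≤ α τ) (h1 : ∀ τ, α τ * x ≤ 1) (hsum : ∑ τ, α τ = η) :
    (1 / 2) * min 1 (η * x) ≤ 1 - ∏ τ, (1 - α τ * x) ∧
      1 - ∏ τ, (1 - α τ * x) ≤ min 1 (η * x) := by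
  have hfac0 : ∀ τ : Fin t, (0:ℝ) ≤ 1 - α τ * x := fun τ => by linarith [h1 τ]
  have hprod0 : (0:ℝ) ≤ ∏ τ, (1 - α τ * x) :=
    Finset.prod_nonneg fun τ _ => hfac0 τ
  have hw : 1 - η * x ≤ ∏ τ, (1 - α τ * x) := by
    have := weier Finset.univ (fun τ => α τ * x)
      (fun τ _ => mul_nonneg (h0 τ) hx) (fun τ _ => h1 τ)
    rwa [← Finset.sum_mul, hsum] at this
  constructor
  · -- lower bound
    set m := min 1 (η * x) with hm
    have hm0 : 0 ≤ m := le_min zero_le_one (mul_nonneg hη.le hx)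
    have hm1 : m ≤ 1 := min_le_left _ _
    have hmle : m ≤ η * x := min_le_right _ _
    have hpe : ∏ τ, (1 - α τ * x) ≤ Real.exp (-(η * x)) := by
      have : ∏ τ, (1 - α τ * x) ≤ ∏ τ, Real.exp (-(α τ * x)) := by
        apply Finset.prod_le_prod (fun τ _ => hfac0 τ)
        intro τ _
        nlinarith [Real.add_one_le_exp (-(α τ * x))]
      calc ∏ τ, (1 - α τ * x) ≤ ∏ τ, Real.exp (-(α τ * x)) := this
        _ = Real.exp (∑ τ, -(α τ * x)) := (Real.exp_sum _ _).symm
        _ = Real.exp (-(η * x)) := by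
            rw [Finset.sum_neg_distrib, ← Finset.sum_mul, hsum]
    have hpm : ∏ τ, (1 - α τ * x) ≤ Real.exp (-m) :=
      hpe.trans (Real.exp_le_exp.2 (by linarith))
    have := exp_half m hm0 hm1
    linarith
  · have h1' : 1 - ∏ τ, (1 - α τ * x) ≤ 1 := by linarith
    have h2' : 1 - ∏ τ, (1 - α τ * x) ≤ η * x := by linarith
    exact le_min h1' h2'

theorem stmt_3 (n t : ℕ) (hn : 0 < n) (μ : Fin n → ℝ)
    (hmono : Antitone μ) (hnn : ∀ j, 0 ≤ μ j)
    (η : ℝ) (hη : 0 < η) (α : Fin t → ℝ)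
    (hα : ∀ τ, 0 ≤ α τ ∧ α τ ≤ min 1 (1 / μ ⟨0, hn⟩))
    (hsum : ∑ τ, α τ = η) :
    (1 / 2 ^ 4) * ∑ j, (min 1 (η * μ j)) ^ 4
        ≤ ∑ j, (1 - ∏ τ, (1 - α τ * μ j)) ^ 4 ∧
      ∑ j, (1 - ∏ τ, (1 - α τ * μ j)) ^ 4 ≤ ∑ j, (min 1 (η * μ j)) ^ 4 := by
  have hkey : ∀ j : Fin n,
      (1 / 2) * min 1 (η * μ j) ≤ 1 - ∏ τ, (1 - α τ * μ j) ∧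
        1 - ∏ τ, (1 - α τ * μ j) ≤ min 1 (η * μ j) := by
    intro j
    apply key t (μ j) (hnn j) η hη α (fun τ => (hα τ).1) _ hsum
    intro τ
    rcases eq_or_lt_of_le (hnn j) with h | h
    · simp [← h]
    · have hμ0 : μ j ≤ μ ⟨0, hn⟩ := hmono (by simp [Fin.le_def])
      have hμ0pos : 0 < μ ⟨0, hn⟩ := lt_of_lt_of_le h hμ0
      have hατ : α τ ≤ 1 / μ ⟨0, hn⟩ := le_trans (hα τ).2 (min_le_right _ _)
      calc α τ * μ j ≤ (1 / μ ⟨0, hn⟩) * μ ⟨0, hn⟩ := by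
            apply mul_le_mul hατ hμ0 (hnn j)
            positivity
        _ = 1 := by field_simp
  have hmnn : ∀ j : Fin n, 0 ≤ min 1 (η * μ j) :=
    fun j => le_min zero_le_one (mul_nonneg hη.le (hnn j))
  constructor
  · rw [Finset.mul_sum]
    apply Finset.sum_le_sum
    intro j _
    have h := (hkey j).1
    have h2 := hmnn j
    calc 1 / 2 ^ 4 * min 1 (η * μ j) ^ 4 = ((1/2) * min 1 (η * μ j)) ^ 4 := by ring
      _ ≤ (1 - ∏ τ, (1 - α τ * μ j)) ^ 4 := by
          apply pow_le_pow_left₀ (by positivity) h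
  · apply Finset.sum_le_sum
    intro j _
    have h := (hkey j).2
    have h1 : 0 ≤ 1 - ∏ τ, (1 - α τ * μ j) := by
      have := (hkey j).1
      have := hmnn j
      linarith
    exact pow_le_pow_left₀ h1 h 4
end
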